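/- Let W be the set of words w in M_n (including ε) with first letter ≠ a_1 and last letter ≠ a_1. Then the classes {p̂_w : w ∈ W} are linearly independent in Ĉ(M_n); equivalently, no nontrivial ℚ-linear combination Σ x_i p_{w_i} with distinct w_i ∈ W is a bounded function on M_n. -/

import Mathlib

open List Finset

/-- Number of occurrences of `w` as a contiguous subword of `v`. -/
def occ {α : Type*} [DecidableEq α] (w v : List α) : ℕ :=
  ((List.range (v.length + 1 - w.length)).filter (fun i => decide (w <+: v.drop i))).length

/-- Elementary counting function, with the convention `p_ε(v) = |v|`. -/
def cnt {α : Type*} [DecidableEq α] (w v : List α) : ℚ :=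
  if w = [] then v.length else occ w v


lemma occ_nil {α : Type*} [DecidableEq α] {w : List α} (hw : w ≠ []) : occ w [] = 0 := by
  have : 1 ≤ w.length := List.length_pos_iff.mpr hw
  unfold occ
  have : ([] : List α).length + 1 - w.length = 0 := by simp; omega
  rw [this]
  simp

lemma occ_of_lt {α : Type*} [DecidableEq α] {w v : List α} (h : v.length < w.length) :
    occ w v = 0 := by
  unfold occ
  have : v.length + 1 - w.length = 0 := by omega
  rw [this]; simp

lemma occ_cons {α : Type*} [DecidableEq α] {w : List α} (hw : w ≠ []) (c : α) (v : List α) :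
    occ w (c :: v) = (if w <+: c :: v then 1 else 0) + occ w v := by
  have hw1 : 1 ≤ w.length := List.length_pos_iff.mpr hw
  by_cases h : w.length ≤ v.length + 1
  · unfold occ
    have h2 : (c :: v).length + 1 - w.length = (v.length + 1 - w.length) + 1 := by
      simp only [List.length_cons]; omega
    rw [h2, List.range_succ_eq_map]
    rw [← List.countP_eq_length_filter, ← List.countP_eq_length_filter,
      List.countP_cons, List.countP_map]
    simp only [List.drop_zero]
    have : ((fun i => decide (w <+: List.drop i (c :: v))) ∘ Nat.succ)
        = (fun i => decide (w <+: List.drop i v)) := by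
      funext i; simp [Function.comp, List.drop_succ_cons]
    rw [this]
    by_cases hp : w <+: c :: v <;> simp [hp, Nat.add_comm]
  · push_neg at h
    rw [occ_of_lt (by simpa using h), occ_of_lt (by omega)]
    have : ¬ (w <+: c :: v) := fun hp => by
      have := hp.length_le; simp at this; omega
    simp [this]

lemma prefix_block {α : Type*} [DecidableEq α] {w : List α} {a : α} {m : ℕ}
    (hw : w ≠ []) (hlast : w.getLast? ≠ some a) (hlen : w.length ≤ m) (s t : List α) :
    w <+: s ++ (List.replicate m a ++ t) ↔ w <+: s := by
  have hw1 : 1 ≤ w.length := List.length_pos_iff.mpr hw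
  constructor
  · intro h
    by_cases hle : w.length ≤ s.length
    · rw [List.prefix_iff_eq_take] at h
      rw [List.take_append_of_le_length hle] at h
      rw [h]; exact List.take_prefix _ _
    · exfalso
      push_neg at hle
      have hi : w.length - 1 < w.length := by omega
      have htot : w.length - 1 < (s ++ (List.replicate m a ++ t)).length := by
        have := h.length_le; omega
      have hval : w[w.length - 1] = a := by
        rw [h.getElem hi]
        rw [List.getElem_append_right (by omega)]
        rw [List.getElem_append_left (by simp; omega)]
        exact List.getElem_replicate _
      apply hlast
      rw [List.getLast?_eq_getLast hw, List.getLast_eq_getElem, hval]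
  · intro h
    exact h.trans (List.prefix_append s _)

lemma occ_replicate_append {α : Type*} [DecidableEq α] {w : List α} {a : α}
    (hw : w ≠ []) (hhead : w.head? ≠ some a) (m : ℕ) (t : List α) :
    occ w (List.replicate m a ++ t) = occ w t := by
  induction m with
  | zero => simp
  | succ k ih =>
    rw [List.replicate_succ, List.cons_append, occ_cons hw]
    have hnp : ¬ (w <+: a :: (List.replicate k a ++ t)) := by
      intro hp
      cases w with
      | nil => exact hw rfl
      | cons c w' =>
        rw [List.cons_prefix_cons] at hp
        exact hhead (by simp [hp.1])
    simp [hnp, ih]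

lemma occ_append_block {α : Type*} [DecidableEq α] {w : List α} {a : α} {m : ℕ}
    (hw : w ≠ []) (hhead : w.head? ≠ some a) (hlast : w.getLast? ≠ some a)
    (hlen : w.length ≤ m) (s t : List α) :
    occ w (s ++ (List.replicate m a ++ t)) = occ w s + occ w t := by
  induction s with
  | nil => simp [occ_nil hw, occ_replicate_append hw hhead m t]
  | cons c s ih =>
    rw [List.cons_append, occ_cons hw, ih, occ_cons hw]
    have : (w <+: c :: (s ++ (List.replicate m a ++ t))) ↔ w <+: c :: s := by
      have := prefix_block hw hlast hlen (c :: s) t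
      simpa using this
    rw [if_congr this rfl rfl]
    omega

def bigWord {α : Type*} (u : List α) (a : α) (m : ℕ) : ℕ → List α
  | 0 => []
  | k + 1 => u ++ (List.replicate m a ++ bigWord u a m k)

lemma length_bigWord {α : Type*} (u : List α) (a : α) (m k : ℕ) :
    (bigWord u a m k).length = k * (u.length + m) := by
  induction k with
  | zero => simp [bigWord]
  | succ j ih => simp [bigWord, ih]; ring

lemma occ_bigWord {α : Type*} [DecidableEq α] {w : List α} {a : α} {m : ℕ}
    (hw : w ≠ []) (hhead : w.head? ≠ some a) (hlast : w.getLast? ≠ some a)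
    (hlen : w.length ≤ m) (u : List α) (k : ℕ) :
    occ w (bigWord u a m k) = k * occ w u := by
  induction k with
  | zero => simp [bigWord, occ_nil hw]
  | succ j ih =>
    rw [show bigWord u a m (j+1) = u ++ (List.replicate m a ++ bigWord u a m j) from rfl]
    rw [occ_append_block hw hhead hlast hlen, ih]
    ring

lemma occ_self {α : Type*} [DecidableEq α] (w : List α) : occ w w = 1 := by
  unfold occ
  have : w.length + 1 - w.length = 1 := by omega
  rw [this]
  simp [List.range_succ]

lemma occ_eq_length_ne {α : Type*} [DecidableEq α] {w v : List α}
    (h : w.length = v.length) (hne : w ≠ v) : occ w v = 0 := by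
  unfold occ
  have h1 : v.length + 1 - w.length = 1 := by omega
  rw [h1]
  have : ¬ (w <+: v) := fun hp => hne (hp.eq_of_length h)
  simp [List.range_succ, this]

/-- The classes of p_w, for w neither beginning nor ending with a_1, are linearly
independent in Ĉ(M_n): no nontrivial combination of them is a bounded function. -/
theorem stmt_11 (n : ℕ) (hn : 2 ≤ n) (x : List (Fin n) →₀ ℚ)
    (hx : ∀ w ∈ x.support, w.head? ≠ some (⟨0, by omega⟩ : Fin n) ∧
      w.getLast? ≠ some (⟨0, by omega⟩ : Fin n))
    (hbdd : ∃ C : ℚ, ∀ v : List (Fin n), |∑ u ∈ x.support, x u * cnt u v| ≤ C) :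
    x = 0 := by
  obtain ⟨C, hC⟩ := hbdd
  set a : Fin n := ⟨0, by omega⟩ with ha
  set m : ℕ := x.support.sup (fun w => w.length) + 1 with hm
  have hmem : ∀ w ∈ x.support, w.length ≤ m := fun w hw =>
    le_trans (Finset.le_sup (f := fun w => w.length) hw) (Nat.le_succ _)
  have hF : ∀ u : List (Fin n),
      (∑ w ∈ x.support, x w * (if w = [] then ((u.length : ℚ) + m) else (occ w u : ℚ))) = 0 := by
    intro u
    set F : ℚ := ∑ w ∈ x.support, x w * (if w = [] then ((u.length : ℚ) + m) else (occ w u : ℚ))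
      with hFdef
    have hk : ∀ k : ℕ, ∑ w ∈ x.support, x w * cnt w (bigWord u a m k) = (k : ℚ) * F := by
      intro k
      rw [hFdef, Finset.mul_sum]
      apply Finset.sum_congr rfl
      intro w hw
      by_cases hwnil : w = []
      · subst hwnil
        simp only [cnt, if_pos rfl, if_pos rfl]
        rw [length_bigWord]
        push_cast
        ring
      · obtain ⟨hhead, hlast⟩ := hx w hw
        rw [cnt, if_neg hwnil, if_neg hwnil]
        rw [occ_bigWord hwnil hhead hlast (hmem w hw) u k]
        push_cast
        ring
    by_contra hF0
    have habs : (0 : ℚ) < |F| := abs_pos.mpr hF0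
    obtain ⟨k, hk'⟩ := exists_nat_gt (C / |F|)
    have h1 := hC (bigWord u a m k)
    rw [hk k] at h1
    rw [abs_mul, Nat.abs_cast] at h1
    have h2 : C / |F| < (k : ℚ) := hk'
    rw [div_lt_iff₀ habs] at h2
    linarith
  have hnil : x [] = 0 := by
    have h0 := hF []
    have hsum : (∑ w ∈ x.support, x w * (if w = [] then ((List.length ([] : List (Fin n)) : ℚ) + m) else (occ w [] : ℚ)))
        = x [] * ((0 : ℚ) + m) := by
      rw [Finset.sum_eq_single ([] : List (Fin n))]
      · simp
      · intro w hw hwne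
        rw [if_neg hwne, occ_nil hwne]
        simp
      · intro h
        rw [Finsupp.notMem_support_iff.mp h]
        ring
    rw [hsum] at h0
    have hm0 : (0 : ℚ) < m := by positivity
    rcases mul_eq_zero.mp h0 with h | h
    · exact h
    · exfalso; rw [zero_add] at h; exact absurd h (ne_of_gt hm0)
  by_contra hx0
  have hS : x.support.Nonempty := Finsupp.support_nonempty_iff.mpr hx0
  obtain ⟨w0, hw0S, hw0min⟩ := x.support.exists_min_image (fun w => w.length) hS
  have hnilnot : ([] : List (Fin n)) ∉ x.support := fun h =>
    (Finsupp.mem_support_iff.mp h) hnil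
  have hw0ne : w0 ≠ [] := fun h => hnilnot (h ▸ hw0S)
  have h0 := hF w0
  have hsum : (∑ w ∈ x.support, x w * (if w = [] then ((w0.length : ℚ) + m) else (occ w w0 : ℚ)))
      = x w0 := by
    rw [Finset.sum_eq_single w0]
    · rw [if_neg hw0ne, occ_self]
      simp
    · intro w hw hwne
      have hwne' : w ≠ [] := fun h => hnilnot (h ▸ hw)
      rw [if_neg hwne']
      have hle : w0.length ≤ w.length := hw0min w hw
      rcases lt_or_eq_of_le hle with hlt | heq
      · rw [occ_of_lt hlt]; simp
      · rw [occ_eq_length_ne heq.symm hwne]; simp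
    · intro h; exact absurd hw0S h
  rw [hsum] at h0
  exact (Finsupp.mem_support_iff.mp hw0S) h0
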